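/- Let W : (0, 2π) → (0, ∞) be C³ with W(φ) → 0 and W''(φ) → 1 as φ → 0⁺, and suppose the transformed potential V = (W')²/W − W'' is identically equal to 1 on (0, 2π), with W extending to a C³ function on a neighborhood of [0,2π] vanishing at 0 and 2π. Then W(φ) = 1 − cos φ for all φ ∈ [0, 2π]. -/

import Mathlib

open Real Filter Set

private lemma aux_const_of_deriv_zero {f : ℝ → ℝ} {a b : ℝ}
    (hf : ∀ x ∈ Icc a b, HasDerivAt f 0 x) : ∀ x ∈ Icc a b, f x = f a := by
  intro x hx
  exact constant_of_has_deriv_right_zero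
    (fun y hy => (hf y hy).continuousAt.continuousWithinAt)
    (fun y hy => (hf y (Ico_subset_Icc_self hy)).hasDerivWithinAt) x hx

theorem constant_V_implies_sineGordon (W : ℝ → ℝ)
    (hW3 : ∃ s : Set ℝ, IsOpen s ∧ Icc (0 : ℝ) (2 * π) ⊆ s ∧ ContDiffOn ℝ 3 W s)
    (hW0 : W 0 = 0) (hW2π : W (2 * π) = 0)
    (hWpos : ∀ φ ∈ Ioo (0 : ℝ) (2 * π), 0 < W φ)
    (hWlim : Tendsto W (nhdsWithin 0 (Ioi 0)) (nhds 0))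
    (hW''lim : Tendsto (iteratedDeriv 2 W) (nhdsWithin 0 (Ioi 0)) (nhds 1))
    (hnorm : Tendsto (fun φ => 2 * W φ / φ ^ 2) (nhdsWithin 0 (Ioi 0)) (nhds 1))
    (hV : ∀ φ ∈ Ioo (0 : ℝ) (2 * π),
      (deriv W φ) ^ 2 / W φ - iteratedDeriv 2 W φ = 1) :
    ∀ φ ∈ Icc (0 : ℝ) (2 * π), W φ = 1 - Real.cos φ := by
  obtain ⟨s, hso, hss, hC3⟩ := hW3
  have hπ : (0:ℝ) < π := pi_pos
  have h2π : (0:ℝ) < 2 * π := by linarith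
  have hiter : iteratedDeriv 2 W = deriv (deriv W) := by
    rw [iteratedDeriv_succ, iteratedDeriv_one]
  rw [hiter] at hV
  -- regularity
  have hC2 : ContDiffOn ℝ 2 (deriv W) s :=
    hC3.deriv_of_isOpen hso (by norm_num)
  have hC1 : ContDiffOn ℝ 1 (deriv (deriv W)) s :=
    hC2.deriv_of_isOpen hso (by norm_num)
  have hWd : ∀ x ∈ s, HasDerivAt W (deriv W x) x := fun x hx =>
    (((hC3.differentiableOn (by norm_num)).differentiableAt
      (hso.mem_nhds hx))).hasDerivAt
  have hW1d : ∀ x ∈ s, HasDerivAt (deriv W) (deriv (deriv W) x) x := fun x hx =>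
    (((hC2.differentiableOn (by norm_num)).differentiableAt
      (hso.mem_nhds hx))).hasDerivAt
  have hW2c : ContinuousOn (deriv (deriv W)) s := hC1.continuousOn
  have h0mem : (0:ℝ) ∈ Icc (0:ℝ) (2*π) := ⟨le_refl 0, by linarith⟩
  have h2πmem : (2*π) ∈ Icc (0:ℝ) (2*π) := ⟨by linarith, le_refl _⟩
  -- deriv W 0 = 0
  have hdW0 : deriv W 0 = 0 := by
    have h1 : Tendsto (slope W 0) (nhdsWithin 0 (Ioi 0)) (nhds (deriv W 0)) :=
      (hasDerivAt_iff_tendsto_slope.1 (hWd 0 (hss h0mem))).mono_left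
        (nhdsWithin_mono _ (fun x hx => ne_of_gt hx))
    have h2 : Tendsto (fun φ => 2 * W φ / φ ^ 2 * (φ / 2)) (nhdsWithin 0 (Ioi 0))
        (nhds 0) := by
      have hhalf : Tendsto (fun φ : ℝ => φ / 2) (nhdsWithin 0 (Ioi 0)) (nhds 0) := by
        have : Tendsto (fun φ : ℝ => φ / 2) (nhds 0) (nhds (0 / 2)) :=
          (continuous_id.div_const 2).tendsto 0
        simpa using this.mono_left nhdsWithin_le_nhds
      simpa using hnorm.mul hhalf
    have h3 : Tendsto (slope W 0) (nhdsWithin 0 (Ioi 0)) (nhds 0) := by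
      refine h2.congr' ?_
      filter_upwards [self_mem_nhdsWithin] with φ (hφ : 0 < φ)
      rw [slope_def_field]
      rw [hW0]
      field_simp [hW0, hφ.ne']
      ring
    exact tendsto_nhds_unique h1 h3
  -- first integral
  set C : ℝ := ((deriv W π)^2 - 2 * W π) / (W π)^2 with hCdef
  have hπIoo : π ∈ Ioo (0:ℝ) (2*π) := ⟨hπ, by linarith⟩
  have hIooIcc : Ioo (0:ℝ) (2*π) ⊆ Icc 0 (2*π) := Ioo_subset_Icc_self
  have hHd : ∀ x ∈ Ioo (0:ℝ) (2*π),
      HasDerivAt (fun φ => ((deriv W φ)^2 - 2 * W φ) / (W φ)^2) 0 x := by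
    intro x hx
    have hxs : x ∈ s := hss (hIooIcc hx)
    have hWx : 0 < W x := hWpos x hx
    have hVx : deriv (deriv W) x = (deriv W x)^2 / W x - 1 := by
      have := hV x hx; linarith
    have hnum : HasDerivAt (fun φ => (deriv W φ)^2 - 2 * W φ)
        (2 * deriv W x ^ 1 * deriv (deriv W) x - 2 * deriv W x) x := by
      exact ((hW1d x hxs).pow 2).sub ((hWd x hxs).const_mul 2)
    have hden : HasDerivAt (fun φ => (W φ)^2) (2 * W x ^ 1 * deriv W x) x :=
      (hWd x hxs).pow 2
    have : HasDerivAt (fun φ => ((deriv W φ)^2 - 2 * W φ) / (W φ)^2) _ x :=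
      hnum.div hden (by positivity)
    convert this using 1
    rw [hVx]
    field_simp
    ring
  have key : ∀ φ ∈ Ioo (0:ℝ) (2*π), (deriv W φ)^2 = C * (W φ)^2 + 2 * W φ := by
    intro φ hφ
    have hWφ : 0 < W φ := hWpos φ hφ
    have hconst : ((deriv W φ)^2 - 2 * W φ) / (W φ)^2 = C := by
      rcases le_total φ π with h | h
      · have hsub : Icc φ π ⊆ Ioo (0:ℝ) (2*π) := fun y hy =>
          ⟨lt_of_lt_of_le hφ.1 hy.1, lt_of_le_of_lt hy.2 hπIoo.2⟩
        have := aux_const_of_deriv_zero (f := fun φ => ((deriv W φ)^2 - 2 * W φ) / (W φ)^2)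
          (a := φ) (b := π) (fun y hy => hHd y (hsub hy))
        have h1 := this π ⟨h, le_refl _⟩
        simpa [hCdef] using h1.symm
      · have hsub : Icc π φ ⊆ Ioo (0:ℝ) (2*π) := fun y hy =>
          ⟨lt_of_lt_of_le hπIoo.1 hy.1, lt_of_le_of_lt hy.2 hφ.2⟩
        have := aux_const_of_deriv_zero (f := fun φ => ((deriv W φ)^2 - 2 * W φ) / (W φ)^2)
          (a := π) (b := φ) (fun y hy => hHd y (hsub hy))
        exact this φ ⟨h, le_refl _⟩
    have h2 : (deriv W φ)^2 - 2 * W φ = C * (W φ)^2 := by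
      field_simp at hconst
      linarith
    linarith
  -- linear ODE on the closed interval
  have hODEIoo : ∀ φ ∈ Ioo (0:ℝ) (2*π), deriv (deriv W) φ = C * W φ + 1 := by
    intro φ hφ
    have hWφ : 0 < W φ := hWpos φ hφ
    have hVx : deriv (deriv W) φ = (deriv W φ)^2 / W φ - 1 := by
      have := hV φ hφ; linarith
    rw [hVx, key φ hφ]
    field_simp
    ring
  have hODE : ∀ φ ∈ Icc (0:ℝ) (2*π), deriv (deriv W) φ = C * W φ + 1 := by
    intro φ hφ
    have hmemcl : φ ∈ closure (Ioo (0:ℝ) (2*π)) := by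
      rw [closure_Ioo (by linarith : (0:ℝ) ≠ 2*π)]
      exact hφ
    have hne : (nhdsWithin φ (Ioo (0:ℝ) (2*π))).NeBot :=
      mem_closure_iff_nhdsWithin_neBot.1 hmemcl
    have hφs : φ ∈ s := hss hφ
    have hcont1 : Tendsto (deriv (deriv W)) (nhdsWithin φ (Ioo (0:ℝ) (2*π)))
        (nhds (deriv (deriv W) φ)) :=
      ((hW2c.continuousAt (hso.mem_nhds hφs)).continuousWithinAt).tendsto
    have hcont2 : Tendsto (fun ψ => C * W ψ + 1) (nhdsWithin φ (Ioo (0:ℝ) (2*π)))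
        (nhds (C * W φ + 1)) := by
      have hWc : ContinuousAt W φ :=
        (hC3.continuousOn.continuousAt (hso.mem_nhds hφs))
      exact (((hWc.const_smul C).add continuousAt_const).continuousWithinAt).tendsto
    have heq : Tendsto (deriv (deriv W)) (nhdsWithin φ (Ioo (0:ℝ) (2*π)))
        (nhds (C * W φ + 1)) := by
      refine hcont2.congr' ?_
      filter_upwards [self_mem_nhdsWithin] with ψ hψ
      exact (hODEIoo ψ hψ).symm
    exact tendsto_nhds_unique hcont1 heq
  -- W ≥ 0 on Icc
  have hWnn : ∀ φ ∈ Icc (0:ℝ) (2*π), 0 ≤ W φ := by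
    intro φ hφ
    rcases eq_or_lt_of_le hφ.1 with h0 | h0
    · rw [← h0, hW0]
    rcases eq_or_lt_of_le hφ.2 with h2 | h2
    · rw [h2, hW2π]
    exact (hWpos φ ⟨h0, h2⟩).le
  -- C < 0
  have hCneg : C < 0 := by
    by_contra hC
    push_neg at hC
    -- G' = deriv W - id is monotone on Icc, G'(0)=0 so deriv W ≥ id, so W grows
    have hG'mono : MonotoneOn (fun φ => deriv W φ - φ) (Icc (0:ℝ) (2*π)) := by
      apply monotoneOn_of_deriv_nonneg (convex_Icc _ _)
      · exact ContinuousOn.sub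
          ((hC2.continuousOn).mono (fun y hy => hss hy)) continuousOn_id
      · intro x hx
        rw [interior_Icc] at hx
        exact ((hW1d x (hss (hIooIcc hx))).sub (hasDerivAt_id x)).differentiableAt.differentiableWithinAt
      · intro x hx
        rw [interior_Icc] at hx
        have hd : HasDerivAt (fun φ => deriv W φ - φ) (deriv (deriv W) x - 1) x :=
          (hW1d x (hss (hIooIcc hx))).sub (hasDerivAt_id x)
        rw [hd.deriv, hODE x (hIooIcc hx)]
        have := hWnn x (hIooIcc hx)
        nlinarith
    have hG'nn : ∀ φ ∈ Icc (0:ℝ) (2*π), 0 ≤ deriv W φ - φ := by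
      intro φ hφ
      have := hG'mono h0mem hφ hφ.1
      simpa [hdW0] using this
    have hGmono : MonotoneOn (fun φ => W φ - φ^2/2) (Icc (0:ℝ) (2*π)) := by
      apply monotoneOn_of_deriv_nonneg (convex_Icc _ _)
      · exact ContinuousOn.sub
          ((hC3.continuousOn).mono (fun y hy => hss hy))
          (by fun_prop)
      · intro x hx
        rw [interior_Icc] at hx
        have hd : HasDerivAt (fun φ => W φ - φ^2/2) (deriv W x - x) x := by
          have : HasDerivAt (fun φ : ℝ => φ^2/2) x x := by
            have := (hasDerivAt_pow 2 x).div_const 2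
            simpa using this
          exact (hWd x (hss (hIooIcc hx))).sub this
        exact hd.differentiableAt.differentiableWithinAt
      · intro x hx
        rw [interior_Icc] at hx
        have hd : HasDerivAt (fun φ => W φ - φ^2/2) (deriv W x - x) x := by
          have : HasDerivAt (fun φ : ℝ => φ^2/2) x x := by
            have := (hasDerivAt_pow 2 x).div_const 2
            simpa using this
          exact (hWd x (hss (hIooIcc hx))).sub this
        rw [hd.deriv]
        exact hG'nn x (hIooIcc hx)
    have hg : W 0 - 0^2/2 ≤ W (2*π) - (2*π)^2/2 := hGmono h0mem h2πmem (by linarith)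
    rw [hW0, hW2π] at hg
    nlinarith
  -- energy argument: W = (1 - cos(k φ))/k²
  set k : ℝ := Real.sqrt (-C) with hkdef
  have hk : 0 < k := Real.sqrt_pos.2 (by linarith)
  have hk2 : k^2 = -C := Real.sq_sqrt (by linarith)
  set S : ℝ → ℝ := fun φ => (1 - Real.cos (k * φ)) / k^2 with hSdef
  set D : ℝ → ℝ := fun φ => W φ - S φ with hDdef
  set D' : ℝ → ℝ := fun φ => deriv W φ - Real.sin (k * φ) / k with hD'def
  have hSd : ∀ x : ℝ, HasDerivAt S (Real.sin (k * x) / k) x := by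
    intro x
    have h1 : HasDerivAt (fun φ : ℝ => k * φ) k x := by
      simpa using (hasDerivAt_id x).const_mul k
    have h2 : HasDerivAt (fun φ => Real.cos (k * φ)) (-Real.sin (k*x) * k) x :=
      (Real.hasDerivAt_cos (k*x)).comp x h1
    have h3 : HasDerivAt (fun φ => (1 - Real.cos (k * φ))/k^2)
        ((0 - (-Real.sin (k*x) * k))/k^2) x :=
      ((hasDerivAt_const x (1:ℝ)).sub h2).div_const _
    convert h3 using 1
    field_simp
    ring
  have hS'd : ∀ x : ℝ, HasDerivAt (fun φ => Real.sin (k * φ) / k) (Real.cos (k * x)) x := by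
    intro x
    have h1 : HasDerivAt (fun φ : ℝ => k * φ) k x := by
      simpa using (hasDerivAt_id x).const_mul k
    have h2 : HasDerivAt (fun φ => Real.sin (k * φ)) (Real.cos (k*x) * k) x :=
      (Real.hasDerivAt_sin (k*x)).comp x h1
    have h3 := h2.div_const k
    rw [mul_div_cancel_right₀ _ hk.ne'] at h3
    exact h3
  have hEd : ∀ x ∈ Icc (0:ℝ) (2*π),
      HasDerivAt (fun φ => (D' φ)^2 + k^2 * (D φ)^2) 0 x := by
    intro x hx
    have hxs : x ∈ s := hss hx
    have hDd : HasDerivAt D (D' x) x := (hWd x hxs).sub (hSd x)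
    have hD'd : HasDerivAt D' (deriv (deriv W) x - Real.cos (k * x)) x :=
      (hW1d x hxs).sub (hS'd x)
    have h4 : HasDerivAt (fun φ => (D' φ)^2 + k^2 * (D φ)^2)
        (2 * D' x ^ 1 * (deriv (deriv W) x - Real.cos (k * x)) +
          k^2 * (2 * D x ^ 1 * D' x)) x :=
      (hD'd.pow 2).add ((hDd.pow 2).const_mul (k^2))
    convert h4 using 1
    have hcos : Real.cos (k * x) = 1 - k^2 * S x := by
      rw [hSdef]
      field_simp
      ring
    rw [hODE x hx, hcos, hDdef]
    simp only [pow_one]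
    have : C = -k^2 := by linarith
    rw [this]
    ring
  have hE0 : ((D' 0)^2 + k^2 * (D 0)^2) = 0 := by
    simp [hD'def, hDdef, hSdef, hdW0, hW0]
  have hWS : ∀ φ ∈ Icc (0:ℝ) (2*π), W φ = S φ := by
    intro φ hφ
    have := aux_const_of_deriv_zero hEd φ hφ
    rw [hE0] at this
    have hD'2 : 0 ≤ (D' φ)^2 := sq_nonneg _
    have hD2 : 0 ≤ (D φ)^2 := sq_nonneg _
    have hkk : 0 < k^2 := by positivity
    have h1 : k^2 * (D φ)^2 = 0 :=
      le_antisymm (by nlinarith) (by positivity)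
    have h2 : (D φ)^2 = 0 := by
      rcases mul_eq_zero.1 h1 with h | h
      · exact absurd h (by positivity)
      · exact h
    have hDz : D φ = 0 := sq_eq_zero_iff.1 h2
    have : W φ - S φ = 0 := hDz
    linarith
  -- boundary condition forces k = 1
  have hcos2π : Real.cos (k * (2*π)) = 1 := by
    have := hWS (2*π) h2πmem
    rw [hW2π, hSdef] at this
    have hkk : (k:ℝ)^2 ≠ 0 := by positivity
    field_simp at this
    rw [← mul_assoc]; linarith
  obtain ⟨n, hn⟩ := (Real.cos_eq_one_iff _).1 hcos2π
  have hkn : (n : ℝ) = k := by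
    have h2πne : (2*π : ℝ) ≠ 0 := by positivity
    exact mul_right_cancel₀ h2πne hn
  have hn1 : (n : ℝ) = 1 := by
    by_contra hne
    have hnpos : 0 < (n:ℝ) := hkn ▸ hk
    have hn0 : 1 ≤ n := by exact_mod_cast hnpos
    have hn2 : 2 ≤ n := by
      rcases lt_or_eq_of_le hn0 with h | h
      · omega
      · exact absurd (by exact_mod_cast h.symm : (n:ℝ) = 1) hne
    have hk2' : (2:ℝ) ≤ k := by
      rw [← hkn]; exact_mod_cast hn2
    have hφ0 : 2*π/k ∈ Ioo (0:ℝ) (2*π) := by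
      constructor
      · positivity
      · rw [div_lt_iff₀ hk]
        nlinarith
    have := hWpos _ hφ0
    rw [hWS _ (hIooIcc hφ0)] at this
    rw [hSdef] at this
    simp only at this
    rw [mul_div_cancel₀ _ (ne_of_gt hk)] at this
    rw [Real.cos_two_pi] at this
    simp at this
  have hk1 : k = 1 := by rw [← hkn, hn1]
  intro φ hφ
  rw [hWS φ hφ, hSdef, hk1]
  simp
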